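/- Nonnegativity of generalized mutual information: Let S be a strictly proper scoring rule with induced generalized entropy H, and let ξ and η be jointly distributed random variables with ξ taking values in the measurable space Y. Define the generalized mutual information I(ξ; η) = H(P_ξ) − E_η[H(P_{ξ|η})]. Then I(ξ; η) ≥ 0, and I(ξ; η) = 0 if and only if ξ and η are independent. -/

import Mathlib

open MeasureTheory ProbabilityTheory

noncomputable section

/-- Generalized entropy induced by a scoring rule `S`: `H(q) = ∫ S(q,y) dq(y)`. -/
def gEntropy {𝒴 : Type*} [MeasurableSpace 𝒴] (S : Measure 𝒴 → 𝒴 → ℝ) (q : Measure 𝒴) : ℝ :=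
  ∫ y, S q y ∂q

/-- A (negatively oriented) scoring rule is proper if the expected score is minimized by the
true distribution. -/
def IsProper {𝒴 : Type*} [MeasurableSpace 𝒴] (S : Measure 𝒴 → 𝒴 → ℝ) : Prop :=
  ∀ p q : Measure 𝒴, IsProbabilityMeasure p → IsProbabilityMeasure q →
    ∫ y, S p y ∂p ≤ ∫ y, S q y ∂p

/-- A scoring rule is strictly proper if it is proper and the minimum is uniquely attained at
the true distribution. -/
def IsStrictlyProper {𝒴 : Type*} [MeasurableSpace 𝒴] (S : Measure 𝒴 → 𝒴 → ℝ) : Prop :=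
  IsProper S ∧ ∀ p q : Measure 𝒴, IsProbabilityMeasure p → IsProbabilityMeasure q →
    q ≠ p → ∫ y, S p y ∂p < ∫ y, S q y ∂p

/-- Generalized mutual information `I(ξ; η) = H(P_ξ) − E_η[H(P_{ξ|η})]` induced by the
generalized entropy of `S`. -/
def gMutualInfo {Ω 𝒴 𝒵 : Type*} [MeasurableSpace Ω] [MeasurableSpace 𝒵]
    [MeasurableSpace 𝒴] [StandardBorelSpace 𝒴] [Nonempty 𝒴]
    (S : Measure 𝒴 → 𝒴 → ℝ) (μ : Measure Ω) [IsFiniteMeasure μ]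
    (ξ : Ω → 𝒴) (η : Ω → 𝒵) : ℝ :=
  gEntropy S (μ.map ξ) - ∫ ω, gEntropy S (condDistrib ξ η μ (η ω)) ∂μ

/-- **Nonnegativity of generalized mutual information.**
For a strictly proper scoring rule `S` and jointly distributed random variables `ξ` (with
values in a standard Borel space) and `η`, `I(ξ; η) ≥ 0`, with `I(ξ; η) = 0` if and only if
`ξ` and `η` are independent. -/
theorem gMutualInfo_nonneg_and_eq_zero_iff_indepFun
    {Ω 𝒴 𝒵 : Type*} [MeasurableSpace Ω] [MeasurableSpace 𝒵]
    [MeasurableSpace 𝒴] [StandardBorelSpace 𝒴] [Nonempty 𝒴]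
    (μ : Measure Ω) [IsProbabilityMeasure μ]
    (S : Measure 𝒴 → 𝒴 → ℝ) (hS : IsStrictlyProper S)
    (ξ : Ω → 𝒴) (η : Ω → 𝒵)
    (hξ : Measurable ξ) (hη : Measurable η)
    -- all integrals appearing are assumed to be well defined and finite
    (hint_marg : Integrable (fun y => S (μ.map ξ) y) (μ.map ξ))
    (hint_cond : Integrable (fun ω => gEntropy S (condDistrib ξ η μ (η ω))) μ)
    (hint_cross : Integrable
      (fun ω => ∫ y, S (μ.map ξ) y ∂(condDistrib ξ η μ (η ω))) μ) :
    0 ≤ gMutualInfo S μ ξ η ∧ (gMutualInfo S μ ξ η = 0 ↔ IndepFun ξ η μ) := by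
  have hmargP : IsProbabilityMeasure (μ.map ξ) := Measure.isProbabilityMeasure_map hξ.aemeasurable
  -- a.e. strong measurability of `(x, y) ↦ S (μ.map ξ) y` w.r.t. the joint law of `(η, ξ)`.
  have hmp : MeasurePreserving (Prod.snd : 𝒵 × 𝒴 → 𝒴)
      (μ.map fun a => (η a, ξ a)) (μ.map ξ) := by
    refine ⟨measurable_snd, ?_⟩
    rw [Measure.map_map measurable_snd (hη.prodMk hξ)]
    rfl
  have hf_ae : AEStronglyMeasurable (fun z : 𝒵 × 𝒴 => S (μ.map ξ) z.2)
      (μ.map fun a => (η a, ξ a)) := hint_marg.1.comp_measurePreserving hmp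
  have hint_comp : Integrable (fun ω => S (μ.map ξ) (ξ ω)) μ :=
    (integrable_map_measure hint_marg.1 hξ.aemeasurable).mp hint_marg
  have hcexp := condExp_prod_ae_eq_integral_condDistrib₀
    (f := fun z : 𝒵 × 𝒴 => S (μ.map ξ) z.2) hη hξ.aemeasurable hf_ae hint_comp
  -- law of total expectation for the score of the marginal
  have hA : ∫ ω, ∫ y, S (μ.map ξ) y ∂(condDistrib ξ η μ (η ω)) ∂μ
      = ∫ y, S (μ.map ξ) y ∂(μ.map ξ) := by
    rw [← integral_congr_ae hcexp, integral_condExp hη.comap_le,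
      integral_map hξ.aemeasurable hint_marg.1]
  set g : Ω → ℝ := fun ω =>
    (∫ y, S (μ.map ξ) y ∂(condDistrib ξ η μ (η ω))) - gEntropy S (condDistrib ξ η μ (η ω))
    with hg_def
  have hg_nonneg : ∀ ω, 0 ≤ g ω := fun ω =>
    sub_nonneg.2 (hS.1 (condDistrib ξ η μ (η ω)) (μ.map ξ) inferInstance hmargP)
  have hg_int : Integrable g μ := hint_cross.sub hint_cond
  have hI : gMutualInfo S μ ξ η = ∫ ω, g ω ∂μ := by
    rw [hg_def, integral_sub hint_cross hint_cond, hA, gMutualInfo, gEntropy]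
  constructor
  · rw [hI]
    exact integral_nonneg hg_nonneg
  rw [hI, integral_eq_zero_iff_of_nonneg hg_nonneg hg_int]
  constructor
  · -- `g = 0` a.e. implies the conditional law equals the marginal a.e., hence independence.
    intro h0
    have hae : ∀ᵐ ω ∂μ, condDistrib ξ η μ (η ω) = μ.map ξ := by
      filter_upwards [h0] with ω hω
      by_contra hne
      have := hS.2 (condDistrib ξ η μ (η ω)) (μ.map ξ) inferInstance hmargP (Ne.symm hne)
      have : 0 < g ω := sub_pos.2 this
      have hω' : g ω = 0 := hω
      linarith
    rw [indepFun_iff_measure_inter_preimage_eq_mul]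
    intro s t hs ht
    have key : μ (η ⁻¹' t ∩ ξ ⁻¹' s) = μ (η ⁻¹' t) * μ.map ξ s := by
      rw [← setLIntegral_preimage_condDistrib hη hξ.aemeasurable hs ht]
      have : ∀ᵐ ω ∂(μ.restrict (η ⁻¹' t)),
          condDistrib ξ η μ (η ω) s = (μ.map ξ) s := by
        filter_upwards [ae_restrict_of_ae hae] with ω hω
        rw [hω]
      rw [lintegral_congr_ae this, setLIntegral_const, mul_comm]
    rw [Set.inter_comm] at key
    rw [key, Measure.map_apply hξ hs, mul_comm]
  · -- independence implies the conditional law equals the marginal a.e., hence `g = 0` a.e.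
    intro hindep
    have hmap : μ.map (fun ω => (η ω, ξ ω)) = (μ.map η).prod (μ.map ξ) :=
      (indepFun_iff_map_prod_eq_prod_map_map hη.aemeasurable hξ.aemeasurable).mp hindep.symm
    have hcp : μ.map (fun ω => (η ω, ξ ω)) = (μ.map η) ⊗ₘ Kernel.const 𝒵 (μ.map ξ) := by
      rw [Measure.compProd_const, hmap]
    have h2 := condDistrib_ae_eq_of_measure_eq_compProd_of_measurable hη hξ
      (κ := Kernel.const 𝒵 (μ.map ξ)) hcp
    have h3 : ∀ᵐ ω ∂μ, Kernel.const 𝒵 (μ.map ξ) (η ω) = condDistrib ξ η μ (η ω) :=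
      ae_of_ae_map hη.aemeasurable h2.symm
    filter_upwards [h3] with ω hω
    simp only [Kernel.const_apply] at hω
    simp only [hg_def, Pi.zero_apply, ← hω, gEntropy, sub_self]
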